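/- Let U: ℝ → ℝ be finite-valued and non-decreasing. If E[U(X_δ)] < +∞ for every δ = (δ₁,δ₂,δ₃) with δᵢ ≥ 0, then E[U(W(x))] < +∞ for every portfolio x ∈ ℝ^d with finite Euclidean norm. Consequently, if in addition sup_{x∈ℝ^d} E[U(W(x))] = +∞, then the economy (U, X) admits an asymptotically optimal portfolio: there exists a sequence of portfolios xₙ with |xₙ| → +∞ and E[U(W(xₙ))] → +∞, while no portfolio with finite Euclidean norm gives infinite expected utility. -/

import Mathlib

open MeasureTheory ProbabilityTheory Filter Matrix
open scoped ENNReal NNReal Topology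

noncomputable section

/-- Signed expectation with values in `EReal`. -/
def eexp {Ω : Type*} [MeasurableSpace Ω] (P : Measure Ω) (f : Ω → ℝ) : EReal :=
  ((∫⁻ ω, ENNReal.ofReal (f ω) ∂P : ℝ≥0∞) : EReal) -
    ((∫⁻ ω, ENNReal.ofReal (-(f ω)) ∂P : ℝ≥0∞) : EReal)

/-- NMVM return vector `X = μ + γ Z + √Z A N`. -/
def nmvmX {Ω : Type*} {d : ℕ} (μ γ : Fin d → ℝ) (A : Matrix (Fin d) (Fin d) ℝ)
    (Z : Ω → ℝ) (N : Ω → Fin d → ℝ) (ω : Ω) : Fin d → ℝ :=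
  fun i => μ i + γ i * Z ω + Real.sqrt (Z ω) * (A *ᵥ N ω) i

/-- Next-period wealth `W(x) = W₀(1+r_f) + W₀ xᵀ(X − 𝟏 r_f)` of portfolio `x`. -/
def wealth {Ω : Type*} {d : ℕ} (μ γ : Fin d → ℝ) (A : Matrix (Fin d) (Fin d) ℝ)
    (Z : Ω → ℝ) (N : Ω → Fin d → ℝ) (rf W0 : ℝ) (x : Fin d → ℝ) (ω : Ω) : ℝ :=
  W0 * (1 + rf) + W0 * ∑ i, x i * (nmvmX μ γ A Z N ω i - rf)

/-- Auxiliary: pushforward of a product measure under evaluation is the component. -/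
lemma map_eval_pi_aux {ι : Type*} [Fintype ι] {α : ι → Type*} [∀ i, MeasurableSpace (α i)]
    (μ : ∀ i, Measure (α i)) [∀ i, IsProbabilityMeasure (μ i)] (i : ι) :
    Measure.map (fun f => f i) (Measure.pi μ) = μ i := by
  classical
  ext s hs
  rw [Measure.map_apply (measurable_pi_apply i) hs]
  have : (fun f : ∀ j, α j => f i) ⁻¹' s = Set.univ.pi (Function.update (fun _ => Set.univ) i s) :=
    Set.eval_preimage
  rw [this, Measure.pi_pi]
  rw [Finset.prod_eq_single i (fun j _ hj => by simp [Function.update_of_ne hj]) (by simp)]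
  simp

/-- Auxiliary: an EReal coercion of a non-top extended nonneg real is below top. -/
lemma ereal_coe_lt_top_aux {x : ℝ≥0∞} (h : x ≠ ⊤) : (x : EReal) < ⊤ :=
  lt_of_le_of_ne le_top (by simpa [EReal.coe_ennreal_eq_top_iff] using h)

/-- Auxiliary: difference is at most the first term. -/
lemma ereal_sub_le_aux (a b : ℝ≥0∞) : (a : EReal) - b ≤ a := by
  rw [sub_eq_add_neg]
  calc (a : EReal) + -(b : EReal) ≤ a + 0 := by
        gcongr
        simpa using EReal.neg_le_neg_iff.mpr (EReal.coe_ennreal_nonneg b)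
    _ = a := add_zero _

/-- Auxiliary: top minus a finite quantity is top. -/
lemma ereal_top_sub_aux {b : ℝ≥0∞} (h : b ≠ ⊤) : (⊤ : EReal) - b = ⊤ := by
  rw [sub_eq_add_neg, EReal.top_add_of_ne_bot]
  simp [EReal.neg_eq_bot_iff, EReal.coe_ennreal_eq_top_iff, h]

/-- if `E[U(X_δ)] < ∞` for all `δ = (δ₁,δ₂,δ₃) ≥ 0`, where
`X_δ = δ₁ + δ₂ Z + δ₃ √Z |N(0,1)|`, then `E[U(W(x))] < ∞` for every portfolio of finite
Euclidean norm; consequently if `sup_x E[U(W(x))] = +∞`, the economy admits an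
asymptotically optimal portfolio. -/
theorem stmt14 {Ω : Type*} [MeasurableSpace Ω] (P : Measure Ω) [IsProbabilityMeasure P]
    {d : ℕ} (μ γ : Fin d → ℝ) (A : Matrix (Fin d) (Fin d) ℝ)
    (Z : Ω → ℝ) (N : Ω → Fin d → ℝ) (N1 : Ω → ℝ)
    (hZmeas : Measurable Z) (hNmeas : Measurable N) (hN1meas : Measurable N1)
    (hZnonneg : ∀ ω, 0 ≤ Z ω)
    (hNlaw : Measure.map N P = Measure.pi fun _ : Fin d => gaussianReal 0 1)
    (hindep : IndepFun Z N P)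
    (hN1law : Measure.map N1 P = gaussianReal 0 1)
    (hindep1 : IndepFun Z N1 P)
    (hPD : (A * Aᵀ).PosDef)
    (rf W0 : ℝ) (hW0 : 0 < W0)
    (U : ℝ → ℝ) (hUmono : Monotone U)
    (hXdelta : ∀ δ₁ δ₂ δ₃ : ℝ, 0 ≤ δ₁ → 0 ≤ δ₂ → 0 ≤ δ₃ →
      (eexp P fun ω => U (δ₁ + δ₂ * Z ω + δ₃ * Real.sqrt (Z ω) * |N1 ω|)) < ⊤) :
    (∀ x : Fin d → ℝ, (eexp P fun ω => U (wealth μ γ A Z N rf W0 x ω)) < ⊤) ∧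
    ((⨆ x : Fin d → ℝ, eexp P fun ω => U (wealth μ γ A Z N rf W0 x ω)) = ⊤ →
      ∃ xseq : ℕ → Fin d → ℝ,
        Tendsto (fun n => Real.sqrt (∑ i, xseq n i ^ 2)) atTop atTop ∧
        Tendsto (fun n => eexp P fun ω => U (wealth μ γ A Z N rf W0 (xseq n) ω))
          atTop (𝓝 (⊤ : EReal)) ∧
        ∀ x : Fin d → ℝ, (eexp P fun ω => U (wealth μ γ A Z N rf W0 x ω)) < ⊤) := by
  classical
  have hUmeas : Measurable U := hUmono.measurable
  -- The one-dimensional bounding quantity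
  set B : ℝ → ℝ → ℝ → ℝ≥0∞ := fun c₁ c₂ c₃ =>
    ∫⁻ ω, ENNReal.ofReal (U (c₁ + c₂ * Z ω + c₃ * Real.sqrt (Z ω) * |N1 ω|)) ∂P with hBdef
  -- B is finite for nonnegative parameters
  have hBlt : ∀ c₁ c₂ c₃ : ℝ, 0 ≤ c₁ → 0 ≤ c₂ → 0 ≤ c₃ → B c₁ c₂ c₃ ≠ ⊤ := by
    intro c₁ c₂ c₃ h1 h2 h3
    have hX := hXdelta c₁ c₂ c₃ h1 h2 h3
    -- the negative part is finite
    have hneg : (∫⁻ ω, ENNReal.ofReal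
        (-(U (c₁ + c₂ * Z ω + c₃ * Real.sqrt (Z ω) * |N1 ω|))) ∂P) ≠ ⊤ := by
      have hb : ∀ ω, ENNReal.ofReal
          (-(U (c₁ + c₂ * Z ω + c₃ * Real.sqrt (Z ω) * |N1 ω|))) ≤ ENNReal.ofReal |U 0| := by
        intro ω
        apply ENNReal.ofReal_le_ofReal
        have harg : (0 : ℝ) ≤ c₁ + c₂ * Z ω + c₃ * Real.sqrt (Z ω) * |N1 ω| := by
          have := hZnonneg ω
          positivity
        have := hUmono harg
        have : -(U (c₁ + c₂ * Z ω + c₃ * Real.sqrt (Z ω) * |N1 ω|)) ≤ -(U 0) := by linarith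
        calc -(U (c₁ + c₂ * Z ω + c₃ * Real.sqrt (Z ω) * |N1 ω|)) ≤ -(U 0) := this
          _ ≤ |U 0| := neg_le_abs _
      have hle := lintegral_mono (μ := P) hb
      rw [lintegral_const] at hle
      simp only [measure_univ, mul_one] at hle
      exact ne_top_of_le_ne_top ENNReal.ofReal_ne_top hle
    intro htop
    have hXa : ((B c₁ c₂ c₃ : ℝ≥0∞) : EReal) -
        ((∫⁻ ω, ENNReal.ofReal
          (-(U (c₁ + c₂ * Z ω + c₃ * Real.sqrt (Z ω) * |N1 ω|))) ∂P : ℝ≥0∞) : EReal) < ⊤ := hX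
    rw [htop, EReal.coe_ennreal_top, ereal_top_sub_aux hneg] at hXa
    exact lt_irrefl _ hXa
  -- B is monotone
  have hBmono : ∀ c₁ c₂ c₃ c₁' c₂' c₃' : ℝ, c₁ ≤ c₁' → c₂ ≤ c₂' → 0 ≤ c₃ → c₃ ≤ c₃' →
      B c₁ c₂ c₃ ≤ B c₁' c₂' c₃' := by
    intro c₁ c₂ c₃ c₁' c₂' c₃' h1 h2 h3 h4
    refine lintegral_mono fun ω => ?_
    apply ENNReal.ofReal_le_ofReal
    apply hUmono
    have hz := hZnonneg ω
    have hs : (0:ℝ) ≤ Real.sqrt (Z ω) := Real.sqrt_nonneg _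
    have ha : (0:ℝ) ≤ |N1 ω| := abs_nonneg _
    have : c₂ * Z ω ≤ c₂' * Z ω := mul_le_mul_of_nonneg_right h2 hz
    have h5 : c₃ * (Real.sqrt (Z ω) * |N1 ω|) ≤ c₃' * (Real.sqrt (Z ω) * |N1 ω|) :=
      mul_le_mul_of_nonneg_right h4 (by positivity)
    nlinarith [h5]
  -- the key distributional identification
  have hterm : ∀ (i : Fin d) (c₁ c₂ c₃ : ℝ),
      (∫⁻ ω, ENNReal.ofReal (U (c₁ + c₂ * Z ω + c₃ * Real.sqrt (Z ω) * |N ω i|)) ∂P)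
        = B c₁ c₂ c₃ := by
    intro i c₁ c₂ c₃
    set g : ℝ × ℝ → ℝ≥0∞ := fun p =>
      ENNReal.ofReal (U (c₁ + c₂ * p.1 + c₃ * Real.sqrt p.1 * |p.2|)) with hgdef
    have hgmeas : Measurable g := by
      apply ENNReal.measurable_ofReal.comp
      apply hUmeas.comp
      exact ((measurable_const.add (measurable_fst.const_mul c₂)).add
        (((Real.continuous_sqrt.measurable.comp measurable_fst).const_mul c₃).mul
          measurable_snd.abs))
    have hNi : Measurable fun ω => N ω i := (measurable_pi_apply i).comp hNmeas
    have law_i : Measure.map (fun ω => N ω i) P = gaussianReal 0 1 := by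
      have hcomp : (fun ω => N ω i) = (fun f : Fin d → ℝ => f i) ∘ N := rfl
      rw [hcomp, ← Measure.map_map (measurable_pi_apply i) hNmeas, hNlaw,
        map_eval_pi_aux (fun _ : Fin d => gaussianReal 0 1) i]
    have hjoint1 : Measure.map (fun ω => (Z ω, N ω i)) P
        = (Measure.map Z P).prod (gaussianReal 0 1) := by
      rw [← law_i]
      exact (indepFun_iff_map_prod_eq_prod_map_map hZmeas.aemeasurable hNi.aemeasurable).mp
        (hindep.comp measurable_id (measurable_pi_apply i))
    have hjoint2 : Measure.map (fun ω => (Z ω, N1 ω)) P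
        = (Measure.map Z P).prod (gaussianReal 0 1) := by
      rw [← hN1law]
      exact (indepFun_iff_map_prod_eq_prod_map_map hZmeas.aemeasurable
        hN1meas.aemeasurable).mp hindep1
    calc (∫⁻ ω, ENNReal.ofReal (U (c₁ + c₂ * Z ω + c₃ * Real.sqrt (Z ω) * |N ω i|)) ∂P)
        = ∫⁻ ω, g (Z ω, N ω i) ∂P := rfl
      _ = ∫⁻ p, g p ∂(Measure.map (fun ω => (Z ω, N ω i)) P) :=
          (lintegral_map hgmeas (hZmeas.prodMk hNi)).symm
      _ = ∫⁻ p, g p ∂(Measure.map (fun ω => (Z ω, N1 ω)) P) := by rw [hjoint1, hjoint2]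
      _ = ∫⁻ ω, g (Z ω, N1 ω) ∂P := lintegral_map hgmeas (hZmeas.prodMk hN1meas)
      _ = B c₁ c₂ c₃ := rfl
  -- coefficients
  set c1 : (Fin d → ℝ) → ℝ := fun x => |W0 * (1 + rf)| + W0 * ∑ i, |x i| * |μ i - rf| with hc1
  set c2 : (Fin d → ℝ) → ℝ := fun x => W0 * ∑ i, |x i| * |γ i| with hc2
  set c3 : (Fin d → ℝ) → ℝ := fun x => W0 * ∑ i, ∑ j, |x i| * |A i j| with hc3
  have hc1nn : ∀ x, 0 ≤ c1 x := by
    intro x; rw [hc1]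
    have : (0:ℝ) ≤ ∑ i, |x i| * |μ i - rf| :=
      Finset.sum_nonneg fun i _ => mul_nonneg (abs_nonneg _) (abs_nonneg _)
    positivity
  have hc2nn : ∀ x, 0 ≤ c2 x := by
    intro x; rw [hc2]
    have : (0:ℝ) ≤ ∑ i, |x i| * |γ i| :=
      Finset.sum_nonneg fun i _ => mul_nonneg (abs_nonneg _) (abs_nonneg _)
    positivity
  have hc3nn : ∀ x, 0 ≤ c3 x := by
    intro x; rw [hc3]
    have : (0:ℝ) ≤ ∑ i, ∑ j, |x i| * |A i j| :=
      Finset.sum_nonneg fun i _ => Finset.sum_nonneg fun j _ =>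
        mul_nonneg (abs_nonneg _) (abs_nonneg _)
    positivity
  -- the pointwise wealth bound
  have hwbound : ∀ (x : Fin d → ℝ) (ω : Ω) (m : ℝ), (∀ j, |N ω j| ≤ m) → 0 ≤ m →
      wealth μ γ A Z N rf W0 x ω ≤ c1 x + c2 x * Z ω + c3 x * Real.sqrt (Z ω) * m := by
    intro x ω m hm hm0
    have hz := hZnonneg ω
    have hs : (0:ℝ) ≤ Real.sqrt (Z ω) := Real.sqrt_nonneg _
    rw [wealth]
    have hstep : ∀ i, x i * (nmvmX μ γ A Z N ω i - rf) ≤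
        |x i| * |μ i - rf| + |x i| * |γ i| * Z ω
          + (∑ j, |x i| * |A i j|) * (Real.sqrt (Z ω) * m) := by
      intro i
      rw [nmvmX]
      have hAv : Real.sqrt (Z ω) * (A *ᵥ N ω) i
          = ∑ j, Real.sqrt (Z ω) * (A i j * N ω j) := by
        rw [mulVec, dotProduct, Finset.mul_sum]
      have hsw : ∑ j, x i * A i j * (Real.sqrt (Z ω) * N ω j)
          = x i * ∑ j, Real.sqrt (Z ω) * (A i j * N ω j) := by
        rw [Finset.mul_sum]
        exact Finset.sum_congr rfl fun j _ => by ring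
      have hexp : x i * (μ i + γ i * Z ω + Real.sqrt (Z ω) * (A *ᵥ N ω) i - rf)
          = x i * (μ i - rf) + x i * γ i * Z ω
            + ∑ j, x i * A i j * (Real.sqrt (Z ω) * N ω j) := by
        rw [hAv, hsw]; ring
      rw [hexp]
      have h1 : x i * (μ i - rf) ≤ |x i| * |μ i - rf| := by
        rw [← abs_mul]; exact le_abs_self _
      have h2 : x i * γ i * Z ω ≤ |x i| * |γ i| * Z ω := by
        apply mul_le_mul_of_nonneg_right _ hz
        rw [← abs_mul]; exact le_abs_self _
      have h3 : ∑ j, x i * A i j * (Real.sqrt (Z ω) * N ω j)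
          ≤ (∑ j, |x i| * |A i j|) * (Real.sqrt (Z ω) * m) := by
        rw [Finset.sum_mul]
        apply Finset.sum_le_sum
        intro j _
        calc x i * A i j * (Real.sqrt (Z ω) * N ω j)
            ≤ |x i * A i j * (Real.sqrt (Z ω) * N ω j)| := le_abs_self _
          _ = |x i| * |A i j| * (Real.sqrt (Z ω) * |N ω j|) := by
              rw [abs_mul, abs_mul, abs_mul]
              rw [abs_of_nonneg hs]
          _ ≤ |x i| * |A i j| * (Real.sqrt (Z ω) * m) := by
              apply mul_le_mul_of_nonneg_left _ (by positivity)
              exact mul_le_mul_of_nonneg_left (hm j) hs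
      linarith
    have hsum := Finset.sum_le_sum (fun i (_ : i ∈ Finset.univ) => hstep i)
    have hW : W0 * ∑ i, x i * (nmvmX μ γ A Z N ω i - rf)
        ≤ W0 * ∑ i, (|x i| * |μ i - rf| + |x i| * |γ i| * Z ω
          + (∑ j, |x i| * |A i j|) * (Real.sqrt (Z ω) * m)) :=
      mul_le_mul_of_nonneg_left hsum hW0.le
    have hfirst : W0 * (1 + rf) ≤ |W0 * (1 + rf)| := le_abs_self _
    have hrw : W0 * ∑ i, (|x i| * |μ i - rf| + |x i| * |γ i| * Z ω
          + (∑ j, |x i| * |A i j|) * (Real.sqrt (Z ω) * m))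
        = W0 * (∑ i, |x i| * |μ i - rf|) + (W0 * ∑ i, |x i| * |γ i|) * Z ω
          + (W0 * ∑ i, ∑ j, |x i| * |A i j|) * Real.sqrt (Z ω) * m := by
      rw [Finset.sum_add_distrib, Finset.sum_add_distrib]
      rw [← Finset.sum_mul, ← Finset.sum_mul]
      ring
    rw [hrw] at hW
    simp only [hc1, hc2, hc3]
    linarith
  -- the pointwise domination
  have hpt : ∀ (x : Fin d → ℝ) (ω : Ω),
      ENNReal.ofReal (U (wealth μ γ A Z N rf W0 x ω)) ≤
      ENNReal.ofReal (U (c1 x + c2 x * Z ω)) +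
        ∑ i, ENNReal.ofReal (U (c1 x + c2 x * Z ω + c3 x * Real.sqrt (Z ω) * |N ω i|)) := by
    intro x ω
    rcases isEmpty_or_nonempty (Fin d) with hd | hd
    · have hw : wealth μ γ A Z N rf W0 x ω ≤ c1 x + c2 x * Z ω := by
        have := hwbound x ω 0 (fun j => absurd (IsEmpty.false j) not_false) le_rfl
        simpa using this
      have h0 : ENNReal.ofReal (U (wealth μ γ A Z N rf W0 x ω))
          ≤ ENNReal.ofReal (U (c1 x + c2 x * Z ω)) :=
        ENNReal.ofReal_le_ofReal (hUmono hw)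
      exact h0.trans le_self_add
    · obtain ⟨j₀, _, hj₀⟩ := Finset.exists_max_image Finset.univ (fun j => |N ω j|)
        (Finset.univ_nonempty)
      have hw : wealth μ γ A Z N rf W0 x ω
          ≤ c1 x + c2 x * Z ω + c3 x * Real.sqrt (Z ω) * |N ω j₀| :=
        hwbound x ω (|N ω j₀|) (fun j => hj₀ j (Finset.mem_univ j)) (abs_nonneg _)
      have h0 : ENNReal.ofReal (U (wealth μ γ A Z N rf W0 x ω))
          ≤ ENNReal.ofReal (U (c1 x + c2 x * Z ω + c3 x * Real.sqrt (Z ω) * |N ω j₀|)) :=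
        ENNReal.ofReal_le_ofReal (hUmono hw)
      refine h0.trans (le_add_left ?_)
      exact Finset.single_le_sum (f := fun i => ENNReal.ofReal
        (U (c1 x + c2 x * Z ω + c3 x * Real.sqrt (Z ω) * |N ω i|)))
        (fun i _ => zero_le) (Finset.mem_univ j₀)
  -- integrating the bound
  have hposle : ∀ x : Fin d → ℝ,
      (∫⁻ ω, ENNReal.ofReal (U (wealth μ γ A Z N rf W0 x ω)) ∂P)
        ≤ (d + 1 : ℕ) * B (c1 x) (c2 x) (c3 x) := by
    intro x
    have hmeas_base : Measurable fun ω => ENNReal.ofReal (U (c1 x + c2 x * Z ω)) := by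
      apply ENNReal.measurable_ofReal.comp
      exact hUmeas.comp (measurable_const.add (hZmeas.const_mul _))
    have hmeas_term : ∀ i : Fin d, Measurable fun ω =>
        ENNReal.ofReal (U (c1 x + c2 x * Z ω + c3 x * Real.sqrt (Z ω) * |N ω i|)) := by
      intro i
      apply ENNReal.measurable_ofReal.comp
      apply hUmeas.comp
      exact (measurable_const.add (hZmeas.const_mul _)).add
        (((Real.continuous_sqrt.measurable.comp hZmeas).const_mul _).mul
          ((measurable_pi_apply i).comp hNmeas).abs)
    calc (∫⁻ ω, ENNReal.ofReal (U (wealth μ γ A Z N rf W0 x ω)) ∂P)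
        ≤ ∫⁻ ω, (ENNReal.ofReal (U (c1 x + c2 x * Z ω)) +
            ∑ i, ENNReal.ofReal
              (U (c1 x + c2 x * Z ω + c3 x * Real.sqrt (Z ω) * |N ω i|))) ∂P :=
          lintegral_mono (hpt x)
      _ = (∫⁻ ω, ENNReal.ofReal (U (c1 x + c2 x * Z ω)) ∂P) +
            ∑ i, ∫⁻ ω, ENNReal.ofReal
              (U (c1 x + c2 x * Z ω + c3 x * Real.sqrt (Z ω) * |N ω i|)) ∂P := by
          rw [lintegral_add_left hmeas_base, lintegral_finset_sum _ fun i _ => hmeas_term i]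
      _ = B (c1 x) (c2 x) 0 + ∑ _i : Fin d, B (c1 x) (c2 x) (c3 x) := by
          congr 1
          · rw [hBdef]
            apply lintegral_congr
            intro ω
            norm_num
          · exact Finset.sum_congr rfl fun i _ => hterm i _ _ _
      _ ≤ B (c1 x) (c2 x) (c3 x) + ∑ _i : Fin d, B (c1 x) (c2 x) (c3 x) := by
          gcongr
          exact hBmono _ _ _ _ _ _ le_rfl le_rfl le_rfl (hc3nn x)
      _ = (d + 1 : ℕ) * B (c1 x) (c2 x) (c3 x) := by
          rw [Finset.sum_const, Finset.card_univ, Fintype.card_fin]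
          push_cast
          rw [nsmul_eq_mul]
          ring
  -- the first claim
  have main : ∀ x : Fin d → ℝ, (eexp P fun ω => U (wealth μ γ A Z N rf W0 x ω)) < ⊤ := by
    intro x
    have hfin : (∫⁻ ω, ENNReal.ofReal (U (wealth μ γ A Z N rf W0 x ω)) ∂P) ≠ ⊤ := by
      apply ne_top_of_le_ne_top _ (hposle x)
      exact ENNReal.mul_ne_top (by simp) (hBlt _ _ _ (hc1nn x) (hc2nn x) (hc3nn x))
    rw [eexp]
    exact lt_of_le_of_lt (ereal_sub_le_aux _ _) (ereal_coe_lt_top_aux hfin)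
  refine ⟨main, fun hsup => ?_⟩
  -- the scaled bounding constants
  set C1 : ℕ → ℝ := fun n => |W0 * (1 + rf)| + W0 * ∑ i, (n : ℝ) * |μ i - rf| with hC1
  set C2 : ℕ → ℝ := fun n => W0 * ∑ i, (n : ℝ) * |γ i| with hC2
  set C3 : ℕ → ℝ := fun n => W0 * ∑ i, ∑ j, (n : ℝ) * |A i j| with hC3
  have hC1nn : ∀ n, 0 ≤ C1 n := by
    intro n; rw [hC1]
    have : (0:ℝ) ≤ ∑ i, (n:ℝ) * |μ i - rf| :=
      Finset.sum_nonneg fun i _ => mul_nonneg (Nat.cast_nonneg n) (abs_nonneg _)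
    positivity
  have hC2nn : ∀ n, 0 ≤ C2 n := by
    intro n; rw [hC2]
    have : (0:ℝ) ≤ ∑ i, (n:ℝ) * |γ i| :=
      Finset.sum_nonneg fun i _ => mul_nonneg (Nat.cast_nonneg n) (abs_nonneg _)
    positivity
  have hC3nn : ∀ n, 0 ≤ C3 n := by
    intro n; rw [hC3]
    have : (0:ℝ) ≤ ∑ i, ∑ j, (n:ℝ) * |A i j| :=
      Finset.sum_nonneg fun i _ => Finset.sum_nonneg fun j _ =>
        mul_nonneg (Nat.cast_nonneg n) (abs_nonneg _)
    positivity
  set K : ℕ → ℝ≥0∞ := fun n => (d + 1 : ℕ) * B (C1 n) (C2 n) (C3 n) with hK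
  have hKfin : ∀ n, K n ≠ ⊤ := fun n =>
    ENNReal.mul_ne_top (by simp) (hBlt _ _ _ (hC1nn n) (hC2nn n) (hC3nn n))
  -- eexp is dominated by K on balls
  have hball : ∀ (n : ℕ) (x : Fin d → ℝ), Real.sqrt (∑ i, x i ^ 2) ≤ (n : ℝ) →
      (eexp P fun ω => U (wealth μ γ A Z N rf W0 x ω)) ≤ (K n : EReal) := by
    intro n x hx
    have habs : ∀ i, |x i| ≤ (n : ℝ) := by
      intro i
      have h1 : x i ^ 2 ≤ ∑ j, x j ^ 2 :=
        Finset.single_le_sum (fun j _ => sq_nonneg (x j)) (Finset.mem_univ i)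
      calc |x i| = Real.sqrt (x i ^ 2) := (Real.sqrt_sq_eq_abs _).symm
        _ ≤ Real.sqrt (∑ j, x j ^ 2) := Real.sqrt_le_sqrt h1
        _ ≤ (n : ℝ) := hx
    have hcc1 : c1 x ≤ C1 n := by
      simp only [hc1, hC1]
      exact add_le_add le_rfl (mul_le_mul_of_nonneg_left (Finset.sum_le_sum fun i _ =>
        mul_le_mul_of_nonneg_right (habs i) (abs_nonneg _)) hW0.le)
    have hcc2 : c2 x ≤ C2 n := by
      simp only [hc2, hC2]
      exact mul_le_mul_of_nonneg_left (Finset.sum_le_sum fun i _ =>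
        mul_le_mul_of_nonneg_right (habs i) (abs_nonneg _)) hW0.le
    have hcc3 : c3 x ≤ C3 n := by
      simp only [hc3, hC3]
      exact mul_le_mul_of_nonneg_left (Finset.sum_le_sum fun i _ =>
        Finset.sum_le_sum fun j _ =>
          mul_le_mul_of_nonneg_right (habs i) (abs_nonneg _)) hW0.le
    have hBle : B (c1 x) (c2 x) (c3 x) ≤ B (C1 n) (C2 n) (C3 n) :=
      hBmono _ _ _ _ _ _ hcc1 hcc2 (hc3nn x) hcc3
    have h1 : (∫⁻ ω, ENNReal.ofReal (U (wealth μ γ A Z N rf W0 x ω)) ∂P) ≤ K n :=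
      (hposle x).trans (by rw [hK]; exact mul_le_mul_right hBle _)
    calc (eexp P fun ω => U (wealth μ γ A Z N rf W0 x ω))
        ≤ ((∫⁻ ω, ENNReal.ofReal (U (wealth μ γ A Z N rf W0 x ω)) ∂P : ℝ≥0∞) : EReal) :=
          ereal_sub_le_aux _ _
      _ ≤ (K n : EReal) := EReal.coe_ennreal_le_coe_ennreal_iff.mpr h1
  -- choose the sequence
  have hchoice : ∀ n : ℕ, ∃ x : Fin d → ℝ,
      max (K n : EReal) ((n : ℝ) : EReal) <
        (eexp P fun ω => U (wealth μ γ A Z N rf W0 x ω)) := by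
    intro n
    have hlt : max (K n : EReal) ((n : ℝ) : EReal) < ⊤ := by
      apply max_lt (ereal_coe_lt_top_aux (hKfin n))
      exact lt_of_le_of_ne le_top (EReal.coe_ne_top _)
    rw [← hsup] at hlt
    exact lt_iSup_iff.mp hlt
  choose xseq hxseq using hchoice
  refine ⟨xseq, ?_, ?_, main⟩
  · -- norms tend to infinity
    refine tendsto_atTop_mono' atTop ?_ tendsto_natCast_atTop_atTop
    filter_upwards with n
    by_contra h
    push_neg at h
    have h1 : (K n : EReal) < eexp P fun ω => U (wealth μ γ A Z N rf W0 (xseq n) ω) :=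
      lt_of_le_of_lt (le_max_left _ _) (hxseq n)
    exact absurd (hball n (xseq n) h.le) (not_le.mpr h1)
  · -- expected utilities tend to ⊤
    rw [EReal.tendsto_nhds_top_iff_real]
    intro r
    filter_upwards [eventually_ge_atTop ⌈r⌉₊] with n hn
    have h1 : (r : EReal) ≤ ((n : ℝ) : EReal) := by
      apply EReal.coe_le_coe_iff.mpr
      calc r ≤ (⌈r⌉₊ : ℝ) := Nat.le_ceil r
        _ ≤ (n : ℝ) := Nat.cast_le.mpr hn
    calc (r : EReal) ≤ ((n : ℝ) : EReal) := h1
      _ ≤ max (K n : EReal) ((n : ℝ) : EReal) := le_max_right _ _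
      _ < _ := hxseq n
end
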